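/- If (α_1, …, α_{n−2}) ∈ (0,1]^{n−2} is a balanced tuple, α, α' ∈ [1/2, 1], and α' = (1+ε)α for some ε > 0, then t_SE^bal(α_1, …, α_{n−2}, α', α') ≤ (1 + 8αε) · t_SE^bal(α_1, …, α_{n−2}, α, α). -/

import Mathlib

open MeasureTheory ProbabilityTheory
open scoped ENNReal ProbabilityTheory

noncomputable section

/-- `Q(μ)`: the maximal atom of a measure on `ℤ`. -/
def concQ (μ : MeasureTheory.Measure ℤ) : ℝ := ⨆ x : ℤ, (μ {x}).toReal

/-- `Q(X)`: the maximal atom of an integer-valued random variable. -/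
def rvQ {Ω : Type*} [MeasurableSpace Ω] (P : MeasureTheory.Measure Ω) (X : Ω → ℤ) : ℝ :=
  ⨆ x : ℤ, (P (X ⁻¹' {x})).toReal

/-- `Q_j(μ)`: the sum of the `j` largest atoms of a measure on `ℤ`,
expressed as the supremum of the masses of sets of `j` integers. -/
def concQk (μ : MeasureTheory.Measure ℤ) (j : ℕ) : ℝ :=
  sSup {t : ℝ | ∃ A : Finset ℤ, A.card = j ∧ t = (μ (A : Set ℤ)).toReal}

/-- `μ₁ ≼_ε μ₂`: the concentration function of `μ₁` is `ε`-dominated by that of `μ₂`. -/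
def EpsDom (ε : ℝ) (μ₁ μ₂ : MeasureTheory.Measure ℤ) : Prop :=
  ∀ j : ℕ, 0 < j → concQk μ₁ j ≤ (1 + ε) * concQk μ₂ j

/-- The measure `ν_α` on `ℤ`. -/
def nu (α : ℝ) : MeasureTheory.Measure ℤ :=
  (∑ i ∈ Finset.range ⌊α⁻¹⌋₊, ENNReal.ofReal α • MeasureTheory.Measure.dirac (i : ℤ)) +
    ENNReal.ofReal (1 - α * (⌊α⁻¹⌋₊ : ℝ)) • MeasureTheory.Measure.dirac ((⌊α⁻¹⌋₊ : ℕ) : ℤ)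

/-- The law of the sum of independent random variables with laws `μ i`,
i.e. the convolution of the measures `μ i`. -/
def lawSum {n : ℕ} (μ : Fin n → MeasureTheory.Measure ℤ) : MeasureTheory.Measure ℤ :=
  MeasureTheory.Measure.map (fun x : Fin n → ℤ => ∑ i, x i) (MeasureTheory.Measure.pi μ)

/-- The variance of a measure on `ℤ`. -/
def intVar (μ : MeasureTheory.Measure ℤ) : ℝ := variance (fun n : ℤ => (n : ℝ)) μ

/-- The variance of `ν_α`. -/
def varNu (α : ℝ) : ℝ := intVar (nu α)

/-- A measure on `ℤ` is log-concave. -/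
def IsLogConcave (μ : MeasureTheory.Measure ℤ) : Prop :=
  ∀ i : ℤ, μ {i - 1} * μ {i + 1} ≤ μ {i} ^ 2

/-- A measure on `ℤ` is symmetric. -/
def IsSymmetricZ (μ : MeasureTheory.Measure ℤ) : Prop := ∀ i : ℤ, μ {-i} = μ {i}

/-- A measure on `ℤ` is unimodal. -/
def IsUnimodal (μ : MeasureTheory.Measure ℤ) : Prop :=
  ∃ m : ℤ, (∀ i, m ≤ i → μ {i + 1} ≤ μ {i}) ∧ (∀ i, i ≤ m → μ {i - 1} ≤ μ {i})

/-- A measure on `ℤ` is standard extremal for `α`: it is the law of `X + i`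
where `X ~ ν_α` or `-X ~ ν_α`. -/
def StandardExtremal (α : ℝ) (μ : MeasureTheory.Measure ℤ) : Prop :=
  ∃ i : ℤ, μ = MeasureTheory.Measure.map (· + i) (nu α) ∨
    μ = MeasureTheory.Measure.map (fun x => -x + i) (nu α)

/-- A measure on `ℤ` is extremal for `α`. -/
def IsExtremal (α : ℝ) (μ : MeasureTheory.Measure ℤ) : Prop :=
  ∃ (S : Finset ℤ) (b : ℤ), S.card = ⌊α⁻¹⌋₊ ∧ b ∉ S ∧
    (∀ i ∈ S, μ {i} = ENNReal.ofReal α) ∧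
    μ {b} = ENNReal.ofReal (1 - (⌊α⁻¹⌋₊ : ℝ) * α)

/-- A sequence of measures is a balanced standard extremal sequence for `α`. -/
def BalancedSE {n : ℕ} (α : Fin n → ℝ) (μ : Fin n → MeasureTheory.Measure ℤ) : Prop :=
  (∀ i, StandardExtremal (α i) (μ i)) ∧
    ∃ σ : Equiv.Perm (Fin n), ∀ i,
      μ (σ i) = MeasureTheory.Measure.map (fun x : ℤ => -x) (μ i)

/-- A tuple is balanced if a balanced standard extremal sequence exists for it. -/
def BalancedTuple {n : ℕ} (α : Fin n → ℝ) : Prop := ∃ μ, BalancedSE α μ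

/-- A tuple is strongly balanced if each value is attained an even number of times. -/
def StronglyBalanced {n : ℕ} (α : Fin n → ℝ) : Prop :=
  ∀ a : ℝ, Even (Finset.univ.filter fun i => α i = a).card

/-- `t_SE^bal(α)`: the probability that the sum of a balanced standard extremal
sequence for `α` equals `0` (this value does not depend on the chosen sequence). -/
def tSEbal {n : ℕ} (α : Fin n → ℝ) : ℝ :=
  sSup {t : ℝ | ∃ μ : Fin n → MeasureTheory.Measure ℤ,
    BalancedSE α μ ∧ t = (lawSum μ {0}).toReal}

/-- `t(α)`: the supremum of `Q(μ₁ * ⋯ * μ_n)` over probability measures with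
`Q(μ i) ≤ α i`. -/
def tOpt {n : ℕ} (α : Fin n → ℝ) : ℝ :=
  sSup {t : ℝ | ∃ μ : Fin n → MeasureTheory.Measure ℤ,
    (∀ i, MeasureTheory.IsProbabilityMeasure (μ i)) ∧
    (∀ i, concQ (μ i) ≤ α i) ∧ t = concQ (lawSum μ)}

/-- `t_SE(α)`: the maximal concentration of the convolution of a standard extremal
sequence for `α`. -/
def tSE {n : ℕ} (α : Fin n → ℝ) : ℝ :=
  sSup {t : ℝ | ∃ μ : Fin n → MeasureTheory.Measure ℤ,
    (∀ i, StandardExtremal (α i) (μ i)) ∧ t = concQ (lawSum μ)}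

end
noncomputable section
namespace Stmt7

open MeasureTheory ENNReal

/-- negation pushforward -/
def gneg (μ : Measure ℤ) : Measure ℤ := Measure.map (fun x : ℤ => -x) μ

lemma gneg_gneg (μ : Measure ℤ) : gneg (gneg μ) = μ := by
  rw [gneg, gneg, Measure.map_map Measurable.of_discrete Measurable.of_discrete]
  simp [Function.comp_def]

lemma gneg_involutive : Function.Involutive gneg := gneg_gneg

lemma gneg_apply (μ : Measure ℤ) (x : ℤ) : gneg μ {x} = μ {-x} := by
  rw [gneg, Measure.map_apply Measurable.of_discrete (measurableSet_singleton x)]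
  congr 1
  ext y
  simp [eq_comm, neg_eq_iff_eq_neg]

lemma gneg_dirac (p : ℤ) : gneg (Measure.dirac p) = Measure.dirac (-p) := by
  rw [gneg, Measure.map_dirac' Measurable.of_discrete]

/-- two-point shape measure -/
def shape (r s : ℝ≥0∞) (p : ℤ) : Measure ℤ :=
  r • Measure.dirac p + s • Measure.dirac (p + 1)

lemma shape_apply (r s : ℝ≥0∞) (p x : ℤ) :
    shape r s p {x} = (if x = p then r else 0) + (if x = p + 1 then s else 0) := by
  simp [shape, Measure.dirac_apply, Set.indicator_apply, eq_comm, mul_ite]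

lemma gneg_shape (r s : ℝ≥0∞) (p : ℤ) : gneg (shape r s p) = shape s r (-p - 1) := by
  rw [gneg, shape, Measure.map_add _ _ Measurable.of_discrete, Measure.map_smul,
    Measure.map_smul, Measure.map_dirac' Measurable.of_discrete,
    Measure.map_dirac' Measurable.of_discrete, shape]
  have h1 : -p - 1 + 1 = -p := by ring
  have h2 : -(p+1) = -p - 1 := by ring
  rw [h1, h2, add_comm]

lemma isProb_shape {a : ℝ} (h0 : 0 ≤ a) (h1 : a ≤ 1) (p : ℤ) :
    IsProbabilityMeasure (shape (ENNReal.ofReal a) (ENNReal.ofReal (1 - a)) p) := by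
  constructor
  rw [shape]
  simp only [Measure.coe_add, Pi.add_apply, Measure.smul_apply, smul_eq_mul,
    measure_univ, mul_one]
  rw [← ENNReal.ofReal_add h0 (by linarith)]
  norm_num

lemma nu_struct {a : ℝ} (h0 : 1 / 2 ≤ a) (h1 : a ≤ 1) :
    nu a = shape (ENNReal.ofReal a) (ENNReal.ofReal (1 - a)) 0 := by
  have ha : 0 < a := by linarith
  rcases eq_or_lt_of_le h0 with h | h
  · have hinv : a⁻¹ = 2 := by rw [← h]; norm_num
    have hfl : ⌊a⁻¹⌋₊ = 2 := by rw [hinv]; norm_num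
    rw [nu, hfl, shape]
    have : (1 : ℝ) - a * (2 : ℕ) = 0 := by rw [← h]; push_cast; ring
    rw [this]
    simp only [ENNReal.ofReal_zero, zero_smul, add_zero, Finset.sum_range_succ,
      Finset.sum_range_one, Nat.cast_zero, Nat.cast_one]
    have : (1 : ℝ) - a = a := by rw [← h]; norm_num
    rw [this, zero_add, Finset.sum_range_zero, zero_add]
  · have hfl : ⌊a⁻¹⌋₊ = 1 := by
      rw [Nat.floor_eq_iff (by positivity)]
      constructor
      · rw [Nat.cast_one, le_inv_comm₀ (by norm_num) ha]
        simpa using h1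
      · rw [Nat.cast_one]
        have : (2:ℝ)⁻¹ < a := by linarith
        calc a⁻¹ < (2:ℝ)⁻¹⁻¹ := by
              apply inv_strictAnti₀ (by norm_num) this
          _ = 2 := by norm_num
          _ ≤ 1 + 1 := by norm_num
    rw [nu, hfl, shape]
    simp only [Finset.sum_range_one, Nat.cast_zero, Nat.cast_one, mul_one, zero_add]

end Stmt7
end
noncomputable section
namespace Stmt7
open MeasureTheory ENNReal

lemma isProb_shape' {r s : ℝ≥0∞} (h : r + s = 1) (p : ℤ) :
    IsProbabilityMeasure (shape r s p) := by
  constructor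
  rw [shape]
  simp only [Measure.coe_add, Pi.add_apply, Measure.smul_apply, smul_eq_mul,
    measure_univ, mul_one]
  exact h

lemma ofReal_add_ofReal_one {a : ℝ} (h0 : 0 ≤ a) (h1 : a ≤ 1) :
    ENNReal.ofReal a + ENNReal.ofReal (1 - a) = 1 := by
  rw [← ENNReal.ofReal_add h0 (by linarith)]
  norm_num

lemma SE_shape {a : ℝ} (h0 : 1 / 2 ≤ a) (h1 : a ≤ 1) {v : Measure ℤ}
    (hv : StandardExtremal a v) :
    ∃ p : ℤ, v = shape (ENNReal.ofReal a) (ENNReal.ofReal (1 - a)) p ∨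
      v = shape (ENNReal.ofReal (1 - a)) (ENNReal.ofReal a) p := by
  obtain ⟨i, hv | hv⟩ := hv
  · refine ⟨i, Or.inl ?_⟩
    rw [hv, nu_struct h0 h1, shape, Measure.map_add _ _ Measurable.of_discrete,
      Measure.map_smul, Measure.map_smul, Measure.map_dirac' Measurable.of_discrete,
      Measure.map_dirac' Measurable.of_discrete, shape]
    norm_num [add_comm]
  · refine ⟨i - 1, Or.inr ?_⟩
    rw [hv, nu_struct h0 h1, shape, Measure.map_add _ _ Measurable.of_discrete,
      Measure.map_smul, Measure.map_smul, Measure.map_dirac' Measurable.of_discrete,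
      Measure.map_dirac' Measurable.of_discrete, shape]
    have e1 : -(0:ℤ) + i = i - 1 + 1 := by ring
    have e2 : -(0+1:ℤ) + i = i - 1 := by ring
    rw [e1, e2, add_comm]

lemma isProb_nu {a : ℝ} (h0 : 0 < a) (h1 : a ≤ 1) : IsProbabilityMeasure (nu a) := by
  constructor
  have hf : a * (⌊a⁻¹⌋₊ : ℝ) ≤ 1 := by
    have := Nat.floor_le (by positivity : (0:ℝ) ≤ a⁻¹)
    calc a * (⌊a⁻¹⌋₊ : ℝ) ≤ a * a⁻¹ := by
          exact mul_le_mul_of_nonneg_left this (le_of_lt h0)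
      _ = 1 := mul_inv_cancel₀ (ne_of_gt h0)
  rw [nu]
  simp only [Measure.coe_add, Pi.add_apply, Measure.smul_apply, smul_eq_mul, measure_univ,
    mul_one, Measure.coe_finset_sum, Finset.sum_apply]
  rw [Finset.sum_const, Finset.card_range, nsmul_eq_mul,
    ← ENNReal.ofReal_natCast, ← ENNReal.ofReal_mul (by positivity),
    ← ENNReal.ofReal_add (by positivity) (by linarith), ]
  norm_num [mul_comm]

lemma SE_isProb {a : ℝ} (h0 : 0 < a) (h1 : a ≤ 1) {v : Measure ℤ}
    (hv : StandardExtremal a v) : IsProbabilityMeasure (v) := by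
  haveI := isProb_nu h0 h1
  obtain ⟨i, hv | hv⟩ := hv <;> rw [hv] <;>
    exact Measure.isProbabilityMeasure_map Measurable.of_discrete.aemeasurable

lemma gneg_SE {a : ℝ} {v : Measure ℤ} (hv : StandardExtremal a v) :
    StandardExtremal a (gneg v) := by
  obtain ⟨i, hv | hv⟩ := hv
  · refine ⟨-i, Or.inr ?_⟩
    rw [hv, gneg, Measure.map_map Measurable.of_discrete Measurable.of_discrete]
    congr 1
    funext x
    simp [Function.comp]
    ring
  · refine ⟨-i, Or.inl ?_⟩
    rw [hv, gneg, Measure.map_map Measurable.of_discrete Measurable.of_discrete]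
    congr 1
    funext x
    simp [Function.comp]
    ring

lemma nu_singleton_le {a : ℝ} (h0 : 0 < a) (h1 : a ≤ 1) (x : ℤ) :
    nu a {x} ≤ ENNReal.ofReal a := by
  have hf1 : a * ((⌊a⁻¹⌋₊:ℕ) + 1 : ℝ) > 1 := by
    have := Nat.lt_succ_floor (a⁻¹)
    push_cast at this ⊢
    calc (1:ℝ) = a * a⁻¹ := (mul_inv_cancel₀ (ne_of_gt h0)).symm
      _ < a * (⌊a⁻¹⌋₊ + 1) := by
          apply mul_lt_mul_of_pos_left _ h0
          exact_mod_cast this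
  rw [nu]
  simp only [Measure.coe_add, Pi.add_apply, Measure.smul_apply, smul_eq_mul,
    Measure.coe_finset_sum, Finset.sum_apply, Measure.dirac_apply, Set.indicator_apply,
    Set.mem_singleton_iff, Pi.one_apply]
  have hsum : (∑ i ∈ Finset.range ⌊a⁻¹⌋₊, ENNReal.ofReal a * if (i:ℤ) = x then 1 else 0)
      = if 0 ≤ x ∧ x < (⌊a⁻¹⌋₊ : ℤ) then ENNReal.ofReal a else 0 := by
    by_cases h : 0 ≤ x ∧ x < (⌊a⁻¹⌋₊ : ℤ)
    · rw [if_pos h, Finset.sum_eq_single x.toNat]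
      · rw [if_pos (Int.toNat_of_nonneg h.1), mul_one]
      · intro i _ hne
        rw [if_neg, mul_zero]
        intro hc
        exact hne (by omega)
      · intro hmem
        exfalso
        exact hmem (Finset.mem_range.mpr (by omega))
    · rw [if_neg h, Finset.sum_eq_zero]
      intro i hi
      rw [Finset.mem_range] at hi
      rw [if_neg, mul_zero]
      intro hc
      exact h (by constructor <;> omega)
  rw [hsum]
  by_cases hx : ((⌊a⁻¹⌋₊:ℕ):ℤ) = x
  · rw [if_pos hx, if_neg (by omega), mul_one, zero_add]
    apply ENNReal.ofReal_le_ofReal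
    nlinarith
  · rw [if_neg hx, mul_zero, add_zero]
    split
    · exact le_refl _
    · exact zero_le'

lemma nu_singleton_zero {a : ℝ} (h0 : 0 < a) (h1 : a ≤ 1) :
    nu a {0} = ENNReal.ofReal a := by
  have hf : 1 ≤ ⌊a⁻¹⌋₊ := by
    apply Nat.le_floor
    rw [Nat.cast_one, le_inv_comm₀ (by norm_num) h0]
    simpa using h1
  rw [nu]
  simp only [Measure.coe_add, Pi.add_apply, Measure.smul_apply, smul_eq_mul,
    Measure.coe_finset_sum, Finset.sum_apply, Measure.dirac_apply, Set.indicator_apply,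
    Set.mem_singleton_iff, Pi.one_apply]
  have hne : ((⌊a⁻¹⌋₊:ℕ):ℤ) ≠ 0 := by exact_mod_cast Nat.one_le_iff_ne_zero.mp hf
  rw [if_neg hne, mul_zero, add_zero]
  rw [Finset.sum_eq_single 0]
  · simp
  · intro i _ hne'
    have : ((i:ℤ)) ≠ 0 := by exact_mod_cast hne'
    simp [this, hne']
  · intro h
    exact absurd (Finset.mem_range.mpr hf) h

lemma SE_sup {a : ℝ} (h0 : 0 < a) (h1 : a ≤ 1) {v : Measure ℤ}
    (hv : StandardExtremal a v) :
    (∀ x, v {x} ≤ ENNReal.ofReal a) ∧ (∃ x, v {x} = ENNReal.ofReal a) := by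
  obtain ⟨i, hv | hv⟩ := hv
  · constructor
    · intro x
      rw [hv, Measure.map_apply Measurable.of_discrete (measurableSet_singleton x)]
      have : (· + i) ⁻¹' ({x} : Set ℤ) = {x - i} := by
        ext y; simp only [Set.mem_preimage, Set.mem_singleton_iff]; omega
      rw [this]
      exact nu_singleton_le h0 h1 _
    · refine ⟨i, ?_⟩
      rw [hv, Measure.map_apply Measurable.of_discrete (measurableSet_singleton i)]
      have : (· + i) ⁻¹' ({i} : Set ℤ) = {0} := by
        ext y; simp only [Set.mem_preimage, Set.mem_singleton_iff]; omega
      rw [this]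
      exact nu_singleton_zero h0 h1
  · constructor
    · intro x
      rw [hv, Measure.map_apply Measurable.of_discrete (measurableSet_singleton x)]
      have : (fun y : ℤ => -y + i) ⁻¹' ({x} : Set ℤ) = {i - x} := by
        ext y; simp only [Set.mem_preimage, Set.mem_singleton_iff]; omega
      rw [this]
      exact nu_singleton_le h0 h1 _
    · refine ⟨i, ?_⟩
      rw [hv, Measure.map_apply Measurable.of_discrete (measurableSet_singleton i)]
      have : (fun y : ℤ => -y + i) ⁻¹' ({i} : Set ℤ) = {0} := by
        ext y; simp only [Set.mem_preimage, Set.mem_singleton_iff]; omega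
      rw [this]
      exact nu_singleton_zero h0 h1

lemma SE_unique {a b : ℝ} (ha0 : 0 < a) (ha1 : a ≤ 1) (hb0 : 0 < b) (hb1 : b ≤ 1)
    {v : Measure ℤ} (hva : StandardExtremal a v) (hvb : StandardExtremal b v) : a = b := by
  obtain ⟨hale, xa, hxa⟩ := SE_sup ha0 ha1 hva
  obtain ⟨hble, xb, hxb⟩ := SE_sup hb0 hb1 hvb
  have h1 : ENNReal.ofReal a ≤ ENNReal.ofReal b := hxa ▸ hble xa
  have h2 : ENNReal.ofReal b ≤ ENNReal.ofReal a := hxb ▸ hale xb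
  have := le_antisymm h1 h2
  rwa [ENNReal.ofReal_eq_ofReal_iff (le_of_lt ha0) (le_of_lt hb0)] at this

lemma SE_symmetric_dirac {a : ℝ} (h0 : 1 / 2 < a) (h1 : a ≤ 1) {v : Measure ℤ}
    (hv : StandardExtremal a v) (hs : gneg v = v) : v = Measure.dirac 0 := by
  have happ : ∀ x : ℤ, v {-x} = v {x} := by
    intro x
    rw [← gneg_apply v x, hs]
  obtain ⟨p, hp⟩ := SE_shape (le_of_lt h0) h1 hv
  rcases eq_or_lt_of_le h1 with hone | hlt
  · -- a = 1
    have hz : ENNReal.ofReal (1 - a) = 0 := by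
      rw [← hone]; simp
    have hvd : ∃ c : ℤ, v = Measure.dirac c := by
      rcases hp with hp | hp
      · exact ⟨p, by rw [hp, shape, hz, zero_smul, add_zero, hone]; simp⟩
      · exact ⟨p + 1, by rw [hp, shape, hz, zero_smul, zero_add, hone]; simp⟩
    obtain ⟨c, hc⟩ := hvd
    have := happ c
    rw [hc] at this
    simp only [Measure.dirac_apply, Set.indicator_apply, Set.mem_singleton_iff,
      Pi.one_apply] at this
    by_cases hcz : c = 0
    · rw [hc, hcz]
    · exfalso
      rw [if_neg (by omega : ¬ c = -c)] at this
      simp at this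
  · -- a < 1
    exfalso
    have hr : ENNReal.ofReal a ≠ 0 := by
      simp [ENNReal.ofReal_eq_zero]; linarith
    have hs' : ENNReal.ofReal (1 - a) ≠ 0 := by
      simp [ENNReal.ofReal_eq_zero]; linarith
    -- uniform treatment: v = shape r s p with r ≠ 0 and s ≠ 0
    obtain ⟨r, s, hrs, hr0, hs0⟩ : ∃ r s, v = shape r s p ∧ r ≠ 0 ∧ s ≠ 0 := by
      rcases hp with hp | hp
      exacts [⟨_, _, hp, hr, hs'⟩, ⟨_, _, hp, hs', hr⟩]
    have hvp : v {p} = r := by rw [hrs, shape_apply]; simp [(by omega : p ≠ p + 1)]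
    have hvp1 : v {p + 1} = s := by rw [hrs, shape_apply]; simp [(by omega : p + 1 ≠ p)]
    have h3 := happ (-p)
    rw [neg_neg, hvp, hrs, shape_apply] at h3
    have hp0 : p = 0 := by
      by_contra hne
      rw [if_neg (by omega), if_neg (by omega)] at h3
      simp at h3
      exact hr0 h3
    have h4 := happ (p + 1)
    rw [hvp1, hrs, shape_apply, hp0] at h4
    rw [if_neg (by omega), if_neg (by omega)] at h4
    simp at h4
    exact hs0 h4.symm

end Stmt7
end
noncomputable section
namespace Stmt7
open MeasureTheory ENNReal

/-- convolution of two measures on ℤ -/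
def mconv (μ ν : Measure ℤ) : Measure ℤ :=
  Measure.map (fun p : ℤ × ℤ => p.1 + p.2) (μ.prod ν)

lemma smul_prod' (c : ℝ≥0∞) (μ ν : Measure ℤ) [SFinite μ] [SFinite ν] :
    (c • μ).prod ν = c • (μ.prod ν) := by
  apply Measure.ext_of_singleton
  rintro ⟨a, b⟩
  simp only [← Set.singleton_prod_singleton, Measure.prod_prod, Measure.smul_apply,
    smul_eq_mul]
  ring

lemma prod_smul' (c : ℝ≥0∞) (μ ν : Measure ℤ) [SFinite μ] [SFinite ν] :
    μ.prod (c • ν) = c • (μ.prod ν) := by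
  apply Measure.ext_of_singleton
  rintro ⟨a, b⟩
  simp only [← Set.singleton_prod_singleton, Measure.prod_prod, Measure.smul_apply,
    smul_eq_mul]
  ring

lemma mconv_two_shape (a b c d : ℝ≥0∞) (p q p' q' : ℤ) :
    mconv (a • Measure.dirac p + b • Measure.dirac q)
      (c • Measure.dirac p' + d • Measure.dirac q') =
    (a*c) • Measure.dirac (p+p') + (a*d) • Measure.dirac (p+q') +
      ((b*c) • Measure.dirac (q+p') + (b*d) • Measure.dirac (q+q')) := by
  have mapadd : ∀ μ ν : Measure (ℤ × ℤ), Measure.map (fun p : ℤ × ℤ => p.1 + p.2) (μ + ν)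
      = Measure.map (fun p : ℤ × ℤ => p.1 + p.2) μ + Measure.map (fun p : ℤ × ℤ => p.1 + p.2) ν :=
    fun μ ν => Measure.map_add μ ν Measurable.of_discrete
  rw [mconv]
  simp only [Measure.add_prod, Measure.prod_add, smul_prod', prod_smul',
    Measure.dirac_prod_dirac, smul_smul, mapadd, Measure.map_smul,
    Measure.map_dirac' (Measurable.of_discrete : Measurable (fun p : ℤ × ℤ => p.1 + p.2))]
  rw [mul_comm c a, mul_comm c b, mul_comm d a, mul_comm d b]
  abel

/-- the symmetric triangular law -/
def tri (q p : ℝ≥0∞) : Measure ℤ :=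
  q • Measure.dirac (-1) + p • Measure.dirac 0 + q • Measure.dirac 1

lemma mconv_shape_gneg (r s : ℝ≥0∞) (p : ℤ) :
    mconv (shape r s p) (gneg (shape r s p)) = tri (r*s) (r*r + s*s) := by
  rw [gneg_shape, shape, shape, mconv_two_shape, tri]
  have e1 : p + (-p - 1) = -1 := by ring
  have e2 : p + (-p - 1 + 1) = 0 := by ring
  have e3 : p + 1 + (-p - 1) = 0 := by ring
  have e4 : p + 1 + (-p - 1 + 1) = 1 := by ring
  rw [e1, e2, e3, e4, add_smul]
  have : r * s = s * r := mul_comm r s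
  rw [this]
  abel

lemma msum_measurable {m : ℕ} : Measurable (fun x : Fin m → ℤ => ∑ i, x i) :=
  Finset.measurable_sum _ (fun i _ => measurable_pi_apply i)

lemma lawSum_perm {m : ℕ} (μ : Fin m → Measure ℤ) [∀ i, SigmaFinite (μ i)]
    (e : Equiv.Perm (Fin m)) : lawSum (fun i => μ (e i)) = lawSum μ := by
  haveI : ∀ i, SigmaFinite ((fun i => μ (e i)) i) := fun i => by dsimp; infer_instance
  rw [lawSum, lawSum, ← (measurePreserving_piCongrLeft μ e).map_eq,
    Measure.map_map msum_measurable
      (MeasurableEquiv.piCongrLeft (fun _ : Fin m => ℤ) e).measurable]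
  congr 1
  funext x
  simp only [Function.comp_apply]
  have h1 : ∀ j, (MeasurableEquiv.piCongrLeft (fun _ : Fin m => ℤ) e) x j = x (e.symm j) := by
    intro j
    have := MeasurableEquiv.piCongrLeft_apply_apply (β := fun _ : Fin m => ℤ) e x (e.symm j)
    rwa [Equiv.apply_symm_apply] at this
  symm
  calc ∑ j, (MeasurableEquiv.piCongrLeft (fun _ : Fin m => ℤ) e) x j
      = ∑ j, x (e.symm j) := Finset.sum_congr rfl fun j _ => h1 j
    _ = ∑ i, x i := Equiv.sum_comp e.symm x

lemma lawSum_append {a b : ℕ} (κ : Fin a → Measure ℤ) (τ : Fin b → Measure ℤ)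
    [∀ i, SigmaFinite (κ i)] [∀ i, SigmaFinite (τ i)] :
    lawSum (Fin.append κ τ) = mconv (lawSum κ) (lawSum τ) := by
  classical
  set e := (finSumFinEquiv : Fin a ⊕ Fin b ≃ Fin (a + b)) with he
  haveI : ∀ i : Fin a ⊕ Fin b, SigmaFinite (Sum.elim κ τ i) := by
    rintro (i | j) <;> dsimp <;> infer_instance
  haveI : ∀ i, SigmaFinite (Fin.append κ τ i) := by
    intro i
    induction i using Fin.addCases with
    | left i => rw [Fin.append_left]; infer_instance
    | right j => rw [Fin.append_right]; infer_instance
  haveI : ∀ i', SigmaFinite ((fun i' => (Fin.append κ τ) (e i')) i') :=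
    fun i' => by dsimp; infer_instance
  have h1 : (fun i' => (Fin.append κ τ) (e i')) = Sum.elim κ τ := by
    funext i'
    rcases i' with i | j
    · rw [he, finSumFinEquiv_apply_left]; exact Fin.append_left κ τ i
    · rw [he, finSumFinEquiv_apply_right]; exact Fin.append_right κ τ j
  have hpi : Measure.pi (Fin.append κ τ)
      = Measure.map (MeasurableEquiv.piCongrLeft (fun _ : Fin (a+b) => ℤ) e)
          (Measure.pi (Sum.elim κ τ)) := by
    rw [← (measurePreserving_piCongrLeft (Fin.append κ τ) e).map_eq]
    congr 1
    rw [h1]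
  have hpi2 : Measure.pi (Sum.elim κ τ)
      = Measure.map (MeasurableEquiv.sumPiEquivProdPi (fun _ : Fin a ⊕ Fin b => ℤ)).symm
          ((Measure.pi κ).prod (Measure.pi τ)) :=
    ((measurePreserving_sumPiEquivProdPi_symm (Sum.elim κ τ)).map_eq).symm
  rw [lawSum, hpi, hpi2,
    Measure.map_map msum_measurable
      (MeasurableEquiv.piCongrLeft (fun _ : Fin (a+b) => ℤ) e).measurable,
    Measure.map_map (Measurable.comp msum_measurable
      (MeasurableEquiv.piCongrLeft (fun _ : Fin (a+b) => ℤ) e).measurable)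
      (MeasurableEquiv.sumPiEquivProdPi (fun _ : Fin a ⊕ Fin b => ℤ)).symm.measurable]
  have hfun : (((fun x : Fin (a+b) → ℤ => ∑ i, x i)
        ∘ (MeasurableEquiv.piCongrLeft (fun _ : Fin (a+b) => ℤ) e))
        ∘ (MeasurableEquiv.sumPiEquivProdPi (fun _ : Fin a ⊕ Fin b => ℤ)).symm)
      = (fun p : ℤ × ℤ => p.1 + p.2)
        ∘ (Prod.map (fun y : Fin a → ℤ => ∑ i, y i) (fun y : Fin b → ℤ => ∑ i, y i)) := by
    funext x
    simp only [Function.comp_apply]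
    set y : Fin a ⊕ Fin b → ℤ :=
      (MeasurableEquiv.sumPiEquivProdPi (fun _ : Fin a ⊕ Fin b => ℤ)).symm x with hy
    have h2 : ∀ j : Fin (a+b),
        (MeasurableEquiv.piCongrLeft (fun _ : Fin (a+b) => ℤ) e) y j = y (e.symm j) := by
      intro j
      have := MeasurableEquiv.piCongrLeft_apply_apply (β := fun _ : Fin (a+b) => ℤ) e y (e.symm j)
      rwa [Equiv.apply_symm_apply] at this
    have h3 : ∀ i : Fin a, y (Sum.inl i) = x.1 i := fun i => rfl
    have h4 : ∀ j : Fin b, y (Sum.inr j) = x.2 j := fun j => rfl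
    calc ∑ j, (MeasurableEquiv.piCongrLeft (fun _ : Fin (a+b) => ℤ) e) y j
        = ∑ j, y (e.symm j) := Finset.sum_congr rfl fun j _ => h2 j
      _ = ∑ s, y s := Equiv.sum_comp e.symm y
      _ = ∑ i, y (Sum.inl i) + ∑ j, y (Sum.inr j) := Fintype.sum_sum_type y
      _ = (∑ i, x.1 i) + (∑ j, x.2 j) := by
          rw [Finset.sum_congr rfl fun i _ => h3 i, Finset.sum_congr rfl fun j _ => h4 j]
  rw [hfun, ← Measure.map_map (Measurable.of_discrete : Measurable (fun p : ℤ × ℤ => p.1 + p.2))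
      (msum_measurable.prodMap msum_measurable),
    ← Measure.map_prod_map _ _ msum_measurable msum_measurable]
  rfl

lemma lawSum_single (c : Measure ℤ) : lawSum ![c] = c := by
  have h1 : (![c] : Fin 1 → Measure ℤ) = fun _ => c := by
    funext i
    exact Matrix.cons_val_fin_one c ![] i
  have h2 : (fun x : Fin 1 → ℤ => ∑ i, x i) = (MeasurableEquiv.funUnique (Fin 1) ℤ) := by
    funext x
    simp [Fin.sum_univ_one, MeasurableEquiv.funUnique]
  rw [lawSum, h1, h2]
  exact (measurePreserving_funUnique c (Fin 1)).map_eq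

lemma lawSum_pair (c d : Measure ℤ) [SigmaFinite c] [SigmaFinite d] :
    lawSum ![c, d] = mconv c d := by
  have hp : (![c, d] : Fin 2 → Measure ℤ) = Fin.append ![c] ![d] := by
    funext i
    fin_cases i <;> rfl
  haveI : ∀ i : Fin 1, SigmaFinite ((![c] : Fin 1 → Measure ℤ) i) := by
    intro i; fin_cases i; dsimp; infer_instance
  haveI : ∀ i : Fin 1, SigmaFinite ((![d] : Fin 1 → Measure ℤ) i) := by
    intro i; fin_cases i; dsimp; infer_instance
  rw [hp, lawSum_append, lawSum_single, lawSum_single]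

lemma lawSum_prob {m : ℕ} (μ : Fin m → Measure ℤ) [∀ i, IsProbabilityMeasure (μ i)] :
    IsProbabilityMeasure (lawSum μ) :=
  Measure.isProbabilityMeasure_map msum_measurable.aemeasurable

lemma mconv_dirac_apply (ρ : Measure ℤ) [SFinite ρ] (k x : ℤ) :
    mconv ρ (Measure.dirac k) {x} = ρ {x - k} := by
  rw [mconv, Measure.prod_dirac, Measure.map_map Measurable.of_discrete Measurable.of_discrete]
  rw [Measure.map_apply Measurable.of_discrete (measurableSet_singleton x)]
  congr 1
  ext y
  simp only [Function.comp_apply, Set.mem_preimage, Set.mem_singleton_iff]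
  omega

lemma mconv_tri_apply_zero (ρ : Measure ℤ) [SFinite ρ] (q p : ℝ≥0∞) :
    mconv ρ (tri q p) {0} = q * ρ {1} + p * ρ {0} + q * ρ {-1} := by
  rw [tri, mconv, Measure.prod_add, Measure.prod_add, prod_smul', prod_smul', prod_smul',
    Measure.map_add _ _ Measurable.of_discrete, Measure.map_add _ _ Measurable.of_discrete,
    Measure.map_smul, Measure.map_smul, Measure.map_smul]
  simp only [Measure.coe_add, Pi.add_apply, Measure.smul_apply, smul_eq_mul]
  have h1 := mconv_dirac_apply ρ (-1) 0
  have h2 := mconv_dirac_apply ρ 0 0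
  have h3 := mconv_dirac_apply ρ 1 0
  rw [mconv] at h1 h2 h3
  rw [h1, h2, h3]
  norm_num

end Stmt7
end
noncomputable section
namespace Stmt7
open MeasureTheory ENNReal

/-- the multiset of values of a tuple -/
def Mof {m : ℕ} (f : Fin m → Measure ℤ) : Multiset (Measure ℤ) :=
  Multiset.map f Finset.univ.val

/-- multiset balance condition -/
def Mbal {m : ℕ} (f : Fin m → Measure ℤ) : Prop :=
  Multiset.map gneg (Mof f) = Mof f

lemma Mof_comp_perm {m : ℕ} (f : Fin m → Measure ℤ) (e : Equiv.Perm (Fin m)) :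
    Mof (fun i => f (e i)) = Mof f := by
  rw [Mof, Mof]
  have h1 : (Finset.univ : Finset (Fin m)).val
      = Multiset.map e (Finset.univ : Finset (Fin m)).val := by
    conv_lhs => rw [← Finset.map_univ_equiv e]
    rw [Finset.map_val]
    rfl
  conv_rhs => rw [h1]
  rw [Multiset.map_map]
  rfl

lemma Mof_gneg {m : ℕ} (f : Fin m → Measure ℤ) :
    Multiset.map gneg (Mof f) = Mof (fun i => gneg (f i)) := by
  rw [Mof, Mof, Multiset.map_map]
  rfl

lemma perm_to_Mbal {m : ℕ} {f : Fin m → Measure ℤ} {σ : Equiv.Perm (Fin m)}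
    (hσ : ∀ i, f (σ i) = gneg (f i)) : Mbal f := by
  rw [Mbal, Mof_gneg]
  have h1 : (fun i => gneg (f i)) = (fun i => f (σ i)) := (funext hσ).symm
  rw [h1]
  exact Mof_comp_perm f σ

open Classical in
lemma Mbal_card {m : ℕ} {f : Fin m → Measure ℤ} (h : Mbal f) (v : Measure ℤ) :
    (Finset.univ.filter (fun i => f i = v)).card
      = (Finset.univ.filter (fun i => f i = gneg v)).card := by
  classical
  have hcount : ∀ w : Measure ℤ,
      Multiset.countP (· = w) (Mof f) = (Finset.univ.filter (fun i => f i = w)).card := by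
    intro w
    rw [Mof, Multiset.countP_map, Finset.card_def, Finset.filter_val]
  have h0 : Multiset.countP (· = gneg v) (Multiset.map gneg (Mof f))
      = Multiset.countP (· = gneg v) (Mof f) := by rw [h]
  rw [Multiset.countP_map] at h0
  have h2 : Multiset.filter (fun a => gneg a = gneg v) (Mof f)
      = Multiset.filter (fun a => a = v) (Mof f) := by
    apply Multiset.filter_congr
    intro x _
    exact ⟨fun hx => gneg_involutive.injective hx, fun hx => by rw [hx]⟩
  rw [h2, ← Multiset.countP_eq_card_filter] at h0
  rw [← hcount v, ← hcount (gneg v)]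
  exact h0

lemma Mbal_partner {m : ℕ} {f : Fin m → Measure ℤ} (h : Mbal f) (j : Fin m) :
    ∃ w : Fin m, f w = gneg (f j) := by
  have h1 : gneg (f j) ∈ Multiset.map gneg (Mof f) := by
    apply Multiset.mem_map_of_mem
    rw [Mof]
    apply Multiset.mem_map_of_mem
    exact Finset.mem_univ j
  rw [h, Mof] at h1
  obtain ⟨w, _, hw⟩ := Multiset.mem_map.mp h1
  exact ⟨w, hw⟩

open Classical in
lemma Mbal_to_perm {m : ℕ} {f : Fin m → Measure ℤ} (h : Mbal f) :
    ∃ σ : Equiv.Perm (Fin m), ∀ i, f (σ i) = gneg (f i) := by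
  have hcard : ∀ v : Measure ℤ,
      Fintype.card {i // f i = v} = Fintype.card {i // f i = gneg v} := by
    intro v
    rw [Fintype.card_subtype, Fintype.card_subtype]
    exact Mbal_card h v
  let E : ∀ v : Measure ℤ, {i // f i = v} ≃ {i // f i = gneg v} := fun v =>
    Fintype.equivOfCardEq (hcard v)
  let F : Fin m → Fin m := fun i => ((E (f i)) ⟨i, rfl⟩).1
  have hF : ∀ i, f (F i) = gneg (f i) := fun i => ((E (f i)) ⟨i, rfl⟩).2
  have aux : ∀ (i : Fin m) (v : Measure ℤ) (hv : f i = v), F i = ((E v) ⟨i, hv⟩).1 := by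
    intro i v hv
    subst hv
    rfl
  have hinj : Function.Injective F := by
    intro i j hij
    have hv : f i = f j := by
      have := hF i
      rw [hij, hF j] at this
      exact gneg_involutive.injective this.symm
    rw [aux i (f j) hv, aux j (f j) rfl] at hij
    have := (E (f j)).injective (Subtype.ext hij)
    exact congrArg Subtype.val this
  refine ⟨Equiv.ofBijective F (Finite.injective_iff_bijective.mp hinj), fun i => ?_⟩
  exact hF i

lemma Mof_append {a b : ℕ} (η : Fin a → Measure ℤ) (τ : Fin b → Measure ℤ) :
    Mof (Fin.append η τ) = Mof η + Mof τ := by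
  rw [Mof, Mof, Mof]
  have h1 : (Finset.univ : Finset (Fin (a + b))).val
      = Multiset.map finSumFinEquiv (Finset.univ : Finset (Fin a ⊕ Fin b)).val := by
    conv_lhs => rw [← Finset.map_univ_equiv (finSumFinEquiv : Fin a ⊕ Fin b ≃ Fin (a+b))]
    rw [Finset.map_val]
    rfl
  rw [h1, Multiset.map_map, ← Finset.univ_disjSum_univ, Finset.val_disjSum,
    Multiset.disjSum, Multiset.map_add, Multiset.map_map, Multiset.map_map]
  congr 1
  · apply Multiset.map_congr rfl
    intro i _
    simp only [Function.comp_apply, finSumFinEquiv_apply_left]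
    exact Fin.append_left η τ i
  · apply Multiset.map_congr rfl
    intro j _
    simp only [Function.comp_apply, finSumFinEquiv_apply_right]
    exact Fin.append_right η τ j

lemma Mof_pair (c d : Measure ℤ) : Mof ![c, d] = c ::ₘ d ::ₘ 0 := by
  rw [Mof]
  rfl

lemma Mbal_of_Mof_eq {m : ℕ} {f f' : Fin m → Measure ℤ} (h : Mof f = Mof f')
    (hb : Mbal f) : Mbal f' := by
  rw [Mbal, ← h, hb]

lemma Mbal_pair_swap {a : ℕ} {η : Fin a → Measure ℤ} (c d : Measure ℤ)
    (hb : Mbal (Fin.append η ![c, gneg c])) : Mbal (Fin.append η ![d, gneg d]) := by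
  rw [Mbal, Mof_append, Mof_pair, Multiset.map_add] at hb ⊢
  simp only [Multiset.map_cons, Multiset.map_zero, gneg_gneg] at hb ⊢
  have key : Multiset.map gneg (Mof η) = Mof η := by
    have hb' : Multiset.map gneg (Mof η) + (c ::ₘ gneg c ::ₘ 0)
        = Mof η + (c ::ₘ gneg c ::ₘ 0) := by
      rw [← hb]
      congr 1
      rw [Multiset.cons_swap]
    exact add_right_cancel hb'
  rw [key]
  congr 1
  rw [Multiset.cons_swap]

end Stmt7
end
noncomputable section
namespace Stmt7
open MeasureTheory ENNReal

lemma extract {n : ℕ} {β : Fin n → ℝ} (hβ : ∀ i, 0 < β i ∧ β i ≤ 1) {a' : ℝ}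
    (ha1 : 1 / 2 < a') (ha2 : a' ≤ 1) {μ : Fin (n+2) → Measure ℤ}
    (hSE : ∀ i, StandardExtremal (Fin.append β ![a', a'] i) (μ i))
    (hb : Mbal μ) :
    ∃ (η : Fin n → Measure ℤ) (v : Measure ℤ) (e : Equiv.Perm (Fin (n+2))),
      (∀ i, StandardExtremal (β i) (η i)) ∧ StandardExtremal a' v ∧
      (fun i => μ (e i)) = Fin.append η ![v, gneg v] := by
  classical
  have h2n : n < n + 2 := by omega
  have h2n1 : n + 1 < n + 2 := by omega
  set iN : Fin (n+2) := ⟨n, h2n⟩ with hiNdef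
  set iN1 : Fin (n+2) := ⟨n+1, h2n1⟩ with hiN1def
  have hiN : iN = Fin.natAdd n (0 : Fin 2) := rfl
  have hiN1 : iN1 = Fin.natAdd n (1 : Fin 2) := rfl
  have tyN : Fin.append β ![a', a'] iN = a' := by rw [hiN, Fin.append_right]; rfl
  have tyN1 : Fin.append β ![a', a'] iN1 = a' := by rw [hiN1, Fin.append_right]; rfl
  have hSEN : StandardExtremal a' (μ iN) := tyN ▸ hSE iN
  have hSEN1 : StandardExtremal a' (μ iN1) := tyN1 ▸ hSE iN1
  have hNne : iN ≠ iN1 := by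
    intro hcon
    have := congrArg Fin.val hcon
    simp [hiNdef, hiN1def] at this
  have hcane : ∀ i : Fin n, Fin.castAdd 2 i ≠ iN ∧ Fin.castAdd 2 i ≠ iN1 := by
    intro i
    have hlt : i.val < n := i.isLt
    constructor <;> intro hcon <;> have := congrArg Fin.val hcon <;>
      simp [hiNdef, hiN1def, Fin.coe_castAdd] at this <;> omega
  have hSEβ : ∀ i : Fin n, StandardExtremal (β i) (μ (Fin.castAdd 2 i)) := by
    intro i
    have := hSE (Fin.castAdd 2 i)
    rwa [Fin.append_left] at this
  by_cases hA : μ iN1 = gneg (μ iN)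
  · refine ⟨fun i => μ (Fin.castAdd 2 i), μ iN, Equiv.refl _, hSEβ, hSEN, ?_⟩
    funext j
    simp only [Equiv.refl_apply]
    induction j using Fin.addCases with
    | left i => rw [Fin.append_left]
    | right k =>
      rw [Fin.append_right]
      fin_cases k
      · rfl
      · exact hA
  · obtain ⟨w, hw⟩ := Mbal_partner hb iN1
    by_cases hwN1 : w = iN1
    · -- μ iN1 is symmetric
      have hsym1 : gneg (μ iN1) = μ iN1 := by rw [← hw, hwN1]
      obtain ⟨w', hw'⟩ := Mbal_partner hb iN
      have hw'ne1 : w' ≠ iN1 := by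
        intro hcon
        apply hA
        rw [← hcon]
        exact hw'
      by_cases hw'N : w' = iN
      · exfalso
        have hsym0 : gneg (μ iN) = μ iN := by rw [← hw', hw'N]
        have hd0 : μ iN = Measure.dirac 0 := SE_symmetric_dirac ha1 ha2 hSEN hsym0
        have hd1 : μ iN1 = Measure.dirac 0 := SE_symmetric_dirac ha1 ha2 hSEN1 hsym1
        apply hA
        rw [hd0, hd1, gneg_dirac, neg_zero]
      · -- pair (iN, w'), w' in the β block
        set e := Equiv.swap w' iN1 with hedef
        refine ⟨fun i => μ (e (Fin.castAdd 2 i)), μ iN, e, ?_, hSEN, ?_⟩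
        · intro i
          by_cases hci : Fin.castAdd 2 i = w'
          · have he1 : e (Fin.castAdd 2 i) = iN1 := by
              rw [hedef, hci, Equiv.swap_apply_left]
            show StandardExtremal (β i) (μ (e (Fin.castAdd 2 i)))
            rw [he1]
            have hSEw' : StandardExtremal (β i) (μ w') := by
              have := hSEβ i
              rwa [hci] at this
            have hSEw'2 : StandardExtremal a' (μ w') := by
              rw [hw']
              exact gneg_SE hSEN
            have hba : β i = a' :=
              SE_unique (hβ i).1 (hβ i).2 (by linarith) ha2 hSEw' hSEw'2
            rw [hba]
            exact hSEN1
          · have he1 : e (Fin.castAdd 2 i) = Fin.castAdd 2 i := by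
              rw [hedef, Equiv.swap_apply_of_ne_of_ne hci (hcane i).2]
            show StandardExtremal (β i) (μ (e (Fin.castAdd 2 i)))
            rw [he1]
            exact hSEβ i
        · funext j
          induction j using Fin.addCases with
          | left i => rw [Fin.append_left]
          | right k =>
            rw [Fin.append_right]
            fin_cases k
            · show μ (e iN) = μ iN
              rw [hedef, Equiv.swap_apply_of_ne_of_ne (fun h => hw'N h.symm) hNne]
            · show μ (e iN1) = gneg (μ iN)
              rw [hedef, Equiv.swap_apply_right]
              exact hw'
    · -- pair (w, iN1), w in the β block; slot iN keeps μ iN? no: v := gneg (μ iN1)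
      have hwnN : w ≠ iN := by
        intro hcon
        apply hA
        have h1 : μ iN = gneg (μ iN1) := by rw [← hcon]; exact hw
        have := congrArg gneg h1
        rw [gneg_gneg] at this
        rw [← this]
      set e := Equiv.swap w iN with hedef
      refine ⟨fun i => μ (e (Fin.castAdd 2 i)), gneg (μ iN1), e, ?_, gneg_SE hSEN1, ?_⟩
      · intro i
        by_cases hci : Fin.castAdd 2 i = w
        · have he1 : e (Fin.castAdd 2 i) = iN := by
            rw [hedef, hci, Equiv.swap_apply_left]
          show StandardExtremal (β i) (μ (e (Fin.castAdd 2 i)))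
          rw [he1]
          have hSEw : StandardExtremal (β i) (μ w) := by
            have := hSEβ i
            rwa [hci] at this
          have hSEw2 : StandardExtremal a' (μ w) := by
            rw [hw]
            exact gneg_SE hSEN1
          have hba : β i = a' :=
            SE_unique (hβ i).1 (hβ i).2 (by linarith) ha2 hSEw hSEw2
          rw [hba]
          exact hSEN
        · have he1 : e (Fin.castAdd 2 i) = Fin.castAdd 2 i := by
            rw [hedef, Equiv.swap_apply_of_ne_of_ne hci (hcane i).1]
          show StandardExtremal (β i) (μ (e (Fin.castAdd 2 i)))
          rw [he1]
          exact hSEβ i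
      · funext j
        induction j using Fin.addCases with
        | left i => rw [Fin.append_left]
        | right k =>
          rw [Fin.append_right]
          fin_cases k
          · show μ (e iN) = gneg (μ iN1)
            rw [hedef, Equiv.swap_apply_right]
            exact hw
          · show μ (e iN1) = gneg (gneg (μ iN1))
            rw [gneg_gneg, hedef,
              Equiv.swap_apply_of_ne_of_ne (fun h => hwN1 h.symm) (fun h => hNne h.symm)]

end Stmt7
end
noncomputable section
namespace Stmt7
open MeasureTheory ENNReal

lemma nu_SE {a : ℝ} : StandardExtremal a (nu a) := by
  refine ⟨0, Or.inl ?_⟩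
  have : (fun x : ℤ => x + 0) = id := by funext x; simp
  show nu a = Measure.map (fun x : ℤ => x + 0) (nu a)
  rw [this, Measure.map_id]

lemma SE_conv_tri {a : ℝ} (h0 : 1 / 2 ≤ a) (h1 : a ≤ 1) {v : Measure ℤ}
    (hv : StandardExtremal a v) :
    mconv v (gneg v) = tri (ENNReal.ofReal a * ENNReal.ofReal (1-a))
      (ENNReal.ofReal a * ENNReal.ofReal a + ENNReal.ofReal (1-a) * ENNReal.ofReal (1-a)) := by
  obtain ⟨p, hp | hp⟩ := SE_shape h0 h1 hv
  · rw [hp, mconv_shape_gneg]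
  · rw [hp, mconv_shape_gneg, mul_comm, add_comm]

lemma tri_toReal (ρ : Measure ℤ) [IsProbabilityMeasure ρ] {a : ℝ} (h0 : 0 ≤ a) (h1 : a ≤ 1) :
    ((mconv ρ (tri (ENNReal.ofReal a * ENNReal.ofReal (1-a))
        (ENNReal.ofReal a * ENNReal.ofReal a
          + ENNReal.ofReal (1-a) * ENNReal.ofReal (1-a)))) {0}).toReal
    = (a*(1-a)) * (ρ {1}).toReal + (a*a + (1-a)*(1-a)) * (ρ {0}).toReal
        + (a*(1-a)) * (ρ {-1}).toReal := by
  have h1a : (0:ℝ) ≤ 1 - a := by linarith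
  rw [mconv_tri_apply_zero]
  simp only [← ENNReal.ofReal_mul h0, ← ENNReal.ofReal_mul h1a]
  rw [← ENNReal.ofReal_add (by positivity) (by positivity)]
  have fin : ∀ (q : ℝ) (x : ℤ), ENNReal.ofReal q * ρ {x} ≠ ⊤ :=
    fun q x => ENNReal.mul_ne_top ENNReal.ofReal_ne_top (measure_ne_top ρ _)
  rw [ENNReal.toReal_add (ENNReal.add_ne_top.mpr ⟨fin _ _, fin _ _⟩) (fin _ _),
    ENNReal.toReal_add (fin _ _) (fin _ _), ENNReal.toReal_mul, ENNReal.toReal_mul,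
    ENNReal.toReal_mul, ENNReal.toReal_ofReal (by positivity),
    ENNReal.toReal_ofReal (by positivity)]

end Stmt7
end

open Stmt7 in
set_option maxHeartbeats 1000000 in
theorem statement7 (n : ℕ) (β : Fin n → ℝ)
    (hβ : ∀ i, 0 < β i ∧ β i ≤ 1) (hbal : BalancedTuple β)
    (α α' ε : ℝ) (hα : α ∈ Set.Icc (1 / 2 : ℝ) 1) (hα' : α' ∈ Set.Icc (1 / 2 : ℝ) 1)
    (hε : 0 < ε) (heq : α' = (1 + ε) * α) :
    tSEbal (Fin.append β ![α', α']) ≤ (1 + 8 * α * ε) * tSEbal (Fin.append β ![α, α]) := by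
  classical
  obtain ⟨hα1, hα2⟩ := hα
  obtain ⟨hα'1, hα'2⟩ := hα'
  have hα0 : 0 < α := by linarith
  have hαα' : α < α' := by nlinarith
  have ha'half : 1 / 2 < α' := by linarith
  have ha'0 : 0 < α' := by linarith
  -- types of the two tuples
  have htype : ∀ i, 0 < Fin.append β ![α, α] i ∧ Fin.append β ![α, α] i ≤ 1 := by
    intro i
    induction i using Fin.addCases with
    | left i => rw [Fin.append_left]; exact hβ i
    | right k => rw [Fin.append_right]; fin_cases k <;> exact ⟨hα0, hα2⟩
  have htype' : ∀ i, 0 < Fin.append β ![α', α'] i ∧ Fin.append β ![α', α'] i ≤ 1 := by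
    intro i
    induction i using Fin.addCases with
    | left i => rw [Fin.append_left]; exact hβ i
    | right k => rw [Fin.append_right]; fin_cases k <;> exact ⟨ha'0, hα'2⟩
  -- the RHS set is bounded above by 1 and nonneg
  have hbdd : ∀ t ∈ {t : ℝ | ∃ μ : Fin (n+2) → Measure ℤ,
      BalancedSE (Fin.append β ![α, α]) μ ∧ t = ((lawSum μ) {0}).toReal}, t ≤ 1 := by
    rintro t ⟨μ, ⟨hSE, _⟩, rfl⟩
    haveI : ∀ i, IsProbabilityMeasure (μ i) :=
      fun i => SE_isProb (htype i).1 (htype i).2 (hSE i)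
    haveI := lawSum_prob μ
    have h1 : (lawSum μ) {0} ≤ 1 := prob_le_one
    have := ENNReal.toReal_mono ENNReal.one_ne_top h1
    simpa using this
  have hBddAbove : BddAbove {t : ℝ | ∃ μ : Fin (n+2) → Measure ℤ,
      BalancedSE (Fin.append β ![α, α]) μ ∧ t = ((lawSum μ) {0}).toReal} := ⟨1, hbdd⟩
  have hRHSnonneg : 0 ≤ tSEbal (Fin.append β ![α, α]) := by
    rw [tSEbal]
    apply Real.sSup_nonneg
    rintro t ⟨μ, _, rfl⟩
    exact ENNReal.toReal_nonneg
  have hfac : 0 ≤ 1 + 8 * α * ε := by positivity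
  rw [tSEbal]
  apply Real.sSup_le
  · rintro t ⟨μ, ⟨hSE, σ, hσ⟩, rfl⟩
    haveI hprob : ∀ i, IsProbabilityMeasure (μ i) :=
      fun i => SE_isProb (htype' i).1 (htype' i).2 (hSE i)
    haveI : ∀ i, SigmaFinite (μ i) := fun i => inferInstance
    have hb : Mbal μ := perm_to_Mbal (σ := σ) (fun i => hσ i)
    obtain ⟨η, v, e, hη, hvSE, hfun⟩ := extract hβ ha'half hα'2 hSE hb
    haveI hηp : ∀ i, IsProbabilityMeasure (η i) :=
      fun i => SE_isProb (hβ i).1 (hβ i).2 (hη i)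
    haveI : ∀ i, SigmaFinite (η i) := fun i => inferInstance
    haveI hvp : IsProbabilityMeasure v := SE_isProb ha'0 hα'2 hvSE
    haveI hvnp : IsProbabilityMeasure (gneg v) := SE_isProb ha'0 hα'2 (gneg_SE hvSE)
    set lam := nu α with hlamdef
    haveI hlamp : IsProbabilityMeasure lam := isProb_nu hα0 hα2
    haveI hlamnp : IsProbabilityMeasure (gneg lam) := SE_isProb hα0 hα2 (gneg_SE nu_SE)
    set μ' := Fin.append η ![lam, gneg lam] with hμ'def
    -- μ' is a balanced SE sequence for (β, α, α)
    have hSE' : ∀ i, StandardExtremal (Fin.append β ![α, α] i) (μ' i) := by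
      intro i
      induction i using Fin.addCases with
      | left i =>
        rw [hμ'def, Fin.append_left, Fin.append_left]
        exact hη i
      | right k =>
        rw [hμ'def, Fin.append_right, Fin.append_right]
        fin_cases k
        · exact nu_SE
        · exact gneg_SE nu_SE
    have hMofeq : Mof μ = Mof (Fin.append η ![v, gneg v]) :=
      (Mof_comp_perm μ e).symm.trans (congrArg Mof hfun)
    have hMbalv : Mbal (Fin.append η ![v, gneg v]) := Mbal_of_Mof_eq hMofeq hb
    have hMbalμ' : Mbal μ' := Mbal_pair_swap v lam hMbalv
    obtain ⟨σ', hσ'⟩ := Mbal_to_perm hMbalμ'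
    -- the common first-block law
    set ρ := lawSum η with hρdef
    haveI hρp : IsProbabilityMeasure ρ := lawSum_prob η
    haveI : ∀ i : Fin 2, SigmaFinite ((![v, gneg v] : Fin 2 → Measure ℤ) i) := by
      intro i; fin_cases i <;> (dsimp; infer_instance)
    haveI : ∀ i : Fin 2, SigmaFinite ((![lam, gneg lam] : Fin 2 → Measure ℤ) i) := by
      intro i; fin_cases i <;> (dsimp; infer_instance)
    have hLHS : lawSum μ = mconv ρ (mconv v (gneg v)) := by
      rw [← lawSum_perm μ e, hfun, lawSum_append, lawSum_pair]
    have hRHS : lawSum μ' = mconv ρ (mconv lam (gneg lam)) := by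
      rw [hμ'def, lawSum_append, lawSum_pair]
    set t' := ((lawSum μ') {0}).toReal with ht'def
    -- compute both values
    set r1 := (ρ {1}).toReal with hr1def
    set r0 := (ρ {0}).toReal with hr0def
    set rm1 := (ρ {-1}).toReal with hrm1def
    have hr1 : 0 ≤ r1 := ENNReal.toReal_nonneg
    have hr0 : 0 ≤ r0 := ENNReal.toReal_nonneg
    have hrm1 : 0 ≤ rm1 := ENNReal.toReal_nonneg
    have hT : ((lawSum μ) {0}).toReal
        = (α'*(1-α')) * r1 + (α'*α' + (1-α')*(1-α')) * r0 + (α'*(1-α')) * rm1 := by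
      rw [hLHS, SE_conv_tri (le_of_lt ha'half) hα'2 hvSE]
      exact tri_toReal ρ (le_of_lt ha'0) hα'2
    have hT' : t' = (α*(1-α)) * r1 + (α*α + (1-α)*(1-α)) * r0 + (α*(1-α)) * rm1 := by
      rw [ht'def, hRHS, SE_conv_tri hα1 hα2 nu_SE]
      exact tri_toReal ρ (le_of_lt hα0) hα2
    -- t' belongs to the RHS set
    have hmem : t' ∈ {t : ℝ | ∃ μ : Fin (n+2) → Measure ℤ,
        BalancedSE (Fin.append β ![α, α]) μ ∧ t = ((lawSum μ) {0}).toReal} :=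
      ⟨μ', ⟨hSE', σ', fun i => hσ' i⟩, rfl⟩
    have ht'le : t' ≤ tSEbal (Fin.append β ![α, α]) := by
      rw [tSEbal]
      exact le_csSup hBddAbove hmem
    -- the key inequality
    have hd : α' - α = ε * α := by rw [heq]; ring
    have hkey : ((lawSum μ) {0}).toReal ≤ (1 + 8 * α * ε) * t' := by
      rw [hT, hT']
      have hs1 : 0 ≤ α' - α := by linarith
      have hs2 : 0 ≤ α + α' - 1 := by linarith
      have hs3 : α + α' - 1 ≤ 1 := by linarith
      have hq : α'*(1-α') ≤ α*(1-α) := by nlinarith [mul_nonneg hs1 hs2]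
      have hp : α'*α' + (1-α')*(1-α') ≤ α*α + (1-α)*(1-α) + 2*(ε*α) := by
        nlinarith [mul_le_mul_of_nonneg_left hs3 (by linarith : (0:ℝ) ≤ 2*(α'-α))]
      have hpl : (1:ℝ)/2 ≤ α*α + (1-α)*(1-α) := by nlinarith [sq_nonneg (2*α - 1)]
      have hqpos : (0:ℝ) ≤ α*(1-α) := by nlinarith
      have e1 : (α'*(1-α')) * r1 ≤ (α*(1-α)) * r1 := mul_le_mul_of_nonneg_right hq hr1
      have e1' : (α'*(1-α')) * rm1 ≤ (α*(1-α)) * rm1 := mul_le_mul_of_nonneg_right hq hrm1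
      have e2 : (α'*α' + (1-α')*(1-α')) * r0
          ≤ (α*α + (1-α)*(1-α)) * r0 + (2*(ε*α)) * r0 := by
        calc (α'*α' + (1-α')*(1-α')) * r0
            ≤ (α*α + (1-α)*(1-α) + 2*(ε*α)) * r0 := mul_le_mul_of_nonneg_right hp hr0
          _ = (α*α + (1-α)*(1-α)) * r0 + (2*(ε*α)) * r0 := by ring
      have e3 : (2*(ε*α)) * r0 ≤ (8*α*ε) * ((α*α + (1-α)*(1-α)) * r0) := by
        have h4 : 2*(ε*α) ≤ (8*α*ε) * (α*α + (1-α)*(1-α)) := by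
          nlinarith [mul_le_mul_of_nonneg_left hpl (by positivity : (0:ℝ) ≤ 8*α*ε)]
        calc (2*(ε*α)) * r0 ≤ ((8*α*ε) * (α*α + (1-α)*(1-α))) * r0 :=
              mul_le_mul_of_nonneg_right h4 hr0
          _ = (8*α*ε) * ((α*α + (1-α)*(1-α)) * r0) := by ring
      have e4 : (0:ℝ) ≤ (8*α*ε) * ((α*(1-α)) * r1) :=
        mul_nonneg (by positivity) (mul_nonneg hqpos hr1)
      have e4' : (0:ℝ) ≤ (8*α*ε) * ((α*(1-α)) * rm1) :=
        mul_nonneg (by positivity) (mul_nonneg hqpos hrm1)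
      nlinarith [e1, e1', e2, e3, e4, e4']
    calc ((lawSum μ) {0}).toReal ≤ (1 + 8 * α * ε) * t' := hkey
      _ ≤ (1 + 8 * α * ε) * tSEbal (Fin.append β ![α, α]) :=
          mul_le_mul_of_nonneg_left ht'le hfac
  · exact mul_nonneg hfac hRHSnonneg
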